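/- arXiv:2003.11311 — 2 statements merged into one kernel-verified Lean document; each statement's English description precedes it below -/
import Mathlib

section
/- Let z ∈ ℂ with z ≠ 0 and z not a nonnegative real number. Define t by t_0 = 1, t_1 = z, and t_j = 0 for all j ≥ 2, and assume 1 + n·z ≠ 0 for all n. Then ζ_n^a = ζ_n^c = (1 + n·|z|)/|1 + n·z| − 1 and the series Σ_{n≥1} ((1 + n·|z|)/|1 + n·z| − 1) diverges (hence the associated ℂSG measure is not of bounded variation). -/
open MeasureTheory Filter Finset

attribute [local instance] Classical.propDecidable

noncomputable section

/-- A relation on ℕ representing a naturally labelled past-finite causal set: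
a strict partial order `r` with `r i j → i < j`. -/
def CausalRel (r : ℕ → ℕ → Prop) : Prop :=
  (∀ i, ¬ r i i) ∧ (∀ i j k, r i j → r j k → r i k) ∧ (∀ i j, r i j → i < j)

/-- Ω, the sample space of naturally labelled past-finite causal sets. -/
def Omega : Type := {r : ℕ → ℕ → Prop // CausalRel r}

/-- An `n`-node: a strict partial order on `Fin n` compatible with the labelling. -/
def IsNode {n : ℕ} (p : Fin n → Fin n → Prop) : Prop :=
  (∀ i, ¬ p i i) ∧ (∀ i j k, p i j → p j k → p i k) ∧
    (∀ i j : Fin n, p i j → (i : ℕ) < (j : ℕ))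

/-- The cylinder set of an `n`-node. -/
def Cyl {n : ℕ} (p : Fin n → Fin n → Prop) : Set Omega :=
  {r | ∀ i j : Fin n, r.1 i.1 j.1 ↔ p i j}

/-- The Boolean set algebra 𝔜 generated by the cylinder sets (and Ω itself) under
finite unions, intersections and complements. -/
inductive InAlg : Set Omega → Prop
  | basic {n : ℕ} (hn : 1 ≤ n) (p : Fin n → Fin n → Prop) (hp : IsNode p) : InAlg (Cyl p)
  | univ : InAlg Set.univ
  | compl (s : Set Omega) : InAlg s → InAlg sᶜ
  | union (s t : Set Omega) : InAlg s → InAlg t → InAlg (s ∪ t)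

/-- Finite additivity of a complex set function on the algebra 𝔜. -/
def FinitelyAdditive (μ : Set Omega → ℂ) : Prop :=
  ∀ s t : Set Omega, InAlg s → InAlg t → Disjoint s t → μ (s ∪ t) = μ s + μ t

/-- A finite partition of Ω into pairwise disjoint members of 𝔜. -/
def IsPartition (π : Finset (Set Omega)) : Prop :=
  (∀ s ∈ π, InAlg s) ∧ ((↑π : Set (Set Omega)).Pairwise Disjoint) ∧
    ⋃₀ (↑π : Set (Set Omega)) = Set.univ

/-- Bounded variation: the sums Σᵢ |μ(αᵢ)| over finite partitions of Ω into members
of 𝔜 are uniformly bounded. -/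
def BoundedVariation (μ : Set Omega → ℂ) : Prop :=
  ∃ M : ℝ, ∀ π : Finset (Set Omega), IsPartition π → ∑ s ∈ π, ‖μ s‖ ≤ M

/-- λ(a,b) = Σ_{k=b}^{a} C(a−b, k−b)·t_k. -/
def lam (t : ℕ → ℂ) (a b : ℕ) : ℂ :=
  ∑ k ∈ Finset.Icc b a, ((a - b).choose (k - b) : ℂ) * t k

/-- The maximal elements of a finite subset `I` with respect to the relation `c`. -/
def maxIn {n : ℕ} (c : Fin n → Fin n → Prop) (I : Finset (Fin n)) : Finset (Fin n) :=
  I.filter fun i => ∀ j ∈ I, ¬ c i j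

/-- The past of the element `m` in the node `p`. -/
def pastOf {n : ℕ} (p : Fin n → Fin n → Prop) (m : Fin n) : Finset (Fin n) :=
  Finset.univ.filter fun i => p i m

/-- The ℂSG amplitude of (the cylinder set of) an `n`-node:
∏_{m=1}^{n−1} λ(ϖ_m, μ_m)/λ(m,0). -/
def amp (t : ℕ → ℂ) {n : ℕ} (p : Fin n → Fin n → Prop) : ℂ :=
  ∏ m ∈ Finset.univ.filter (fun m : Fin n => 1 ≤ (m : ℕ)),
    lam t (pastOf p m).card (maxIn p (pastOf p m)).card / lam t (m : ℕ) 0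

/-- μ is the ℂSG measure associated to the coupling constants t: it is finitely
additive on 𝔜 and takes the prescribed values on cylinder sets. -/
def IsCSG (t : ℕ → ℂ) (μ : Set Omega → ℂ) : Prop :=
  FinitelyAdditive μ ∧
    ∀ (n : ℕ), 1 ≤ n → ∀ p : Fin n → Fin n → Prop, IsNode p → μ (Cyl p) = amp t p

/-- `I` is an order ideal (downward-closed set) of the relation `c`. -/
def isIdeal {n : ℕ} (c : Fin n → Fin n → Prop) (I : Finset (Fin n)) : Prop :=
  ∀ j ∈ I, ∀ i, c i j → i ∈ I

/-- Q(c) := Σ_{I an order ideal of c} |λ(|I|, m(I))|. -/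
def Qval (t : ℕ → ℂ) {n : ℕ} (c : Fin n → Fin n → Prop) : ℝ :=
  ∑ I ∈ Finset.univ.filter (fun I : Finset (Fin n) => isIdeal c I),
    ‖lam t I.card (maxIn c I).card‖

/-- ζ(c) := Q(c)/|λ(n,0)| − 1. -/
def zeta (t : ℕ → ℂ) {n : ℕ} (c : Fin n → Fin n → Prop) : ℝ :=
  Qval t c / ‖lam t n 0‖ - 1

/-- ζ_n^a := (Σ_{k=0}^{n} C(n,k)·|t_k|)/|λ(n,0)| − 1. -/
def zetaA (t : ℕ → ℂ) (n : ℕ) : ℝ :=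
  (∑ k ∈ Finset.range (n + 1), (n.choose k : ℝ) * ‖t k‖) /
    ‖lam t n 0‖ - 1

/-- ζ_n^c := (|t_0| + Σ_{ϖ=1}^{n} |λ(ϖ,1)|)/|λ(n,0)| − 1. -/
def zetaC (t : ℕ → ℂ) (n : ℕ) : ℝ :=
  (‖t 0‖ + ∑ w ∈ Finset.Icc 1 n, ‖lam t w 1‖) /
    ‖lam t n 0‖ - 1

/-- S_n := Σ_{p an n-node} |μ(Cyl(p))|. -/
def Svar (μ : Set Omega → ℂ) (n : ℕ) : ℝ :=
  ∑ p : {p : Fin n → Fin n → Prop // IsNode p}, ‖μ (Cyl p.1)‖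
/-! ### Auxiliary lemmas for statement_12 -/

section AuxForest

def anc {n : ℕ} (f : ∀ m : Fin n, Option (Fin m.val)) (m : Fin n) : Finset (Fin n) :=
  match h : f m with
  | none => ∅
  | some i => insert ⟨i.val, i.isLt.trans m.isLt⟩ (anc f ⟨i.val, i.isLt.trans m.isLt⟩)
termination_by m.val
decreasing_by simpa using i.isLt

lemma anc_none {n : ℕ} (f : ∀ m : Fin n, Option (Fin m.val)) (m : Fin n)
    (h : f m = none) : anc f m = ∅ := by
  rw [anc, h]

lemma anc_some {n : ℕ} (f : ∀ m : Fin n, Option (Fin m.val)) (m : Fin n)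
    (i : Fin m.val) (h : f m = some i) :
    anc f m = insert ⟨i.val, i.isLt.trans m.isLt⟩ (anc f ⟨i.val, i.isLt.trans m.isLt⟩) := by
  rw [anc, h]

lemma anc_lt_aux {n : ℕ} (f : ∀ m : Fin n, Option (Fin m.val)) :
    ∀ (k : ℕ) (m : Fin n), m.val ≤ k → ∀ a ∈ anc f m, a.val < m.val := by
  intro k
  induction k with
  | zero =>
    intro m hm a ha
    cases h : f m with
    | none => rw [anc_none f m h] at ha; exact absurd ha (Finset.notMem_empty a)
    | some i => exact absurd i.isLt (by omega)
  | succ k ih =>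
    intro m hm a ha
    cases h : f m with
    | none => rw [anc_none f m h] at ha; exact absurd ha (Finset.notMem_empty a)
    | some i =>
      rw [anc_some f m i h] at ha
      rcases Finset.mem_insert.1 ha with rfl | ha
      · exact i.isLt
      · have := ih ⟨i.val, i.isLt.trans m.isLt⟩ (by have := i.isLt; simp; omega) a ha
        simp at this
        exact this.trans i.isLt

lemma anc_lt {n : ℕ} (f : ∀ m : Fin n, Option (Fin m.val)) (m : Fin n)
    {a : Fin n} (ha : a ∈ anc f m) : a.val < m.val :=
  anc_lt_aux f m.val m le_rfl a ha

lemma anc_trans_aux {n : ℕ} (f : ∀ m : Fin n, Option (Fin m.val)) :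
    ∀ (k : ℕ) (m : Fin n), m.val ≤ k → ∀ a b : Fin n,
      a ∈ anc f b → b ∈ anc f m → a ∈ anc f m := by
  intro k
  induction k with
  | zero =>
    intro m hm a b _ hb
    have := anc_lt f m hb; omega
  | succ k ih =>
    intro m hm a b hab hb
    cases h : f m with
    | none => rw [anc_none f m h] at hb; exact absurd hb (Finset.notMem_empty b)
    | some i =>
      rw [anc_some f m i h] at hb ⊢
      rcases Finset.mem_insert.1 hb with rfl | hb
      · exact Finset.mem_insert_of_mem hab
      · exact Finset.mem_insert_of_mem
          (ih ⟨i.val, i.isLt.trans m.isLt⟩ (by have := i.isLt; simp; omega) a b hab hb)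

lemma anc_trans {n : ℕ} (f : ∀ m : Fin n, Option (Fin m.val)) {m a b : Fin n}
    (hab : a ∈ anc f b) (hb : b ∈ anc f m) : a ∈ anc f m :=
  anc_trans_aux f m.val m le_rfl a b hab hb

/-- The forest relation associated to a parent function. -/
def pf {n : ℕ} (f : ∀ m : Fin n, Option (Fin m.val)) : Fin n → Fin n → Prop :=
  fun i j => i ∈ anc f j

lemma isNode_pf {n : ℕ} (f : ∀ m : Fin n, Option (Fin m.val)) : IsNode (pf f) := by
  refine ⟨fun i hi => ?_, fun i j k hij hjk => anc_trans f hij hjk,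
    fun i j hij => anc_lt f j hij⟩
  have := anc_lt f i hi; omega

lemma pastOf_pf {n : ℕ} (f : ∀ m : Fin n, Option (Fin m.val)) (m : Fin n) :
    pastOf (pf f) m = anc f m := by
  ext a; unfold pastOf; rw [Finset.mem_filter]
  exact ⟨fun h => h.2, fun h => ⟨Finset.mem_univ _, h⟩⟩

lemma maxIn_pf_none {n : ℕ} (f : ∀ m : Fin n, Option (Fin m.val)) (m : Fin n)
    (h : f m = none) : maxIn (pf f) (pastOf (pf f) m) = ∅ := by
  rw [pastOf_pf, anc_none f m h]
  simp [maxIn]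

lemma maxIn_pf_some {n : ℕ} (f : ∀ m : Fin n, Option (Fin m.val)) (m : Fin n)
    (i : Fin m.val) (h : f m = some i) :
    maxIn (pf f) (pastOf (pf f) m) = {⟨i.val, i.isLt.trans m.isLt⟩} := by
  set i' : Fin n := ⟨i.val, i.isLt.trans m.isLt⟩ with hi'
  rw [pastOf_pf, anc_some f m i h]
  ext a
  simp only [maxIn, Finset.mem_filter, Finset.mem_insert, Finset.mem_singleton]
  constructor
  · rintro ⟨ha | ha, hmax⟩
    · exact ha
    · exact absurd ha (by simpa [pf] using hmax i' (Or.inl rfl))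
  · rintro rfl
    refine ⟨Or.inl rfl, ?_⟩
    intro j hj
    rcases hj with rfl | hj
    · intro hc
      have := anc_lt f i' (show i' ∈ anc f i' from hc)
      omega
    · intro hc
      have h1 := anc_lt f i' hj
      have h2 := anc_lt f j (show i' ∈ anc f j from hc)
      omega

lemma pf_injective {n : ℕ} : Function.Injective (pf (n := n)) := by
  intro f g h
  have hanc : ∀ m, anc f m = anc g m := by
    intro m; ext a
    exact iff_of_eq (congrFun (congrFun h a) m)
  funext m
  cases hf : f m with
  | none =>
    cases hg : g m with
    | none => rfl
    | some j =>
      exfalso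
      have := hanc m
      rw [anc_none f m hf, anc_some g m j hg] at this
      exact absurd this.symm (Finset.insert_ne_empty _ _)
  | some i =>
    cases hg : g m with
    | none =>
      exfalso
      have := hanc m
      rw [anc_none g m hg, anc_some f m i hf] at this
      exact absurd this (Finset.insert_ne_empty _ _)
    | some j =>
      have heq := hanc m
      rw [anc_some f m i hf, anc_some g m j hg] at heq
      set i' : Fin n := ⟨i.val, i.isLt.trans m.isLt⟩
      set j' : Fin n := ⟨j.val, j.isLt.trans m.isLt⟩
      have hij : i' = j' := by
        have h1 : i' ∈ insert j' (anc g j') := heq ▸ Finset.mem_insert_self i' _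
        have h2 : j' ∈ insert i' (anc f i') := heq ▸ Finset.mem_insert_self j' _
        rcases Finset.mem_insert.1 h1 with h1 | h1
        · exact h1
        · rcases Finset.mem_insert.1 h2 with h2 | h2
          · exact h2.symm
          · have := anc_lt f i' h2; have := anc_lt g j' h1; omega
      congr 1
      exact Fin.ext (by simpa using congrArg Fin.val hij)

end AuxForest
section AuxLam

lemma Icc_zero_eq_range (n : ℕ) : Finset.Icc 0 n = Finset.range (n + 1) := by
  ext k; simp [Nat.lt_succ_iff]

lemma lam_zero {z : ℂ} (t : ℕ → ℂ) (ht0 : t 0 = 1) (ht1 : t 1 = z)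
    (ht : ∀ j : ℕ, 2 ≤ j → t j = 0) (n : ℕ) :
    lam t n 0 = 1 + (n : ℂ) * z := by
  unfold lam
  rw [Icc_zero_eq_range]
  have hsub : Finset.range (min 2 (n + 1)) ⊆ Finset.range (n + 1) := by
    apply Finset.range_subset_range.2; omega
  rw [← Finset.sum_subset hsub (by
    intro k hk hk2
    simp only [Finset.mem_range] at hk hk2
    rw [ht k (by omega)]
    ring)]
  rcases Nat.eq_zero_or_pos n with rfl | hn
  · simp [ht0]
  · rw [show min 2 (n + 1) = 2 by omega]
    rw [Finset.sum_range_succ, Finset.sum_range_succ, Finset.sum_range_zero]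
    simp [ht0, ht1, Nat.choose_one_right]

lemma lam_one {z : ℂ} (t : ℕ → ℂ) (ht1 : t 1 = z)
    (ht : ∀ j : ℕ, 2 ≤ j → t j = 0) (w : ℕ) (hw : 1 ≤ w) :
    lam t w 1 = z := by
  unfold lam
  have hsub : ({1} : Finset ℕ) ⊆ Finset.Icc 1 w := by
    simp [Finset.singleton_subset_iff, hw]
  rw [← Finset.sum_subset hsub (by
    intro k hk hk1
    simp only [Finset.mem_Icc] at hk
    simp only [Finset.mem_singleton] at hk1
    rw [ht k (by omega)]
    ring)]
  simp [ht1]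

lemma lam_self (t : ℕ → ℂ) (ht0 : t 0 = 1) : lam t 0 0 = 1 := by
  simp [lam, ht0]

end AuxLam

section AuxAnalytic

/-- the `n`-th term of the divergent series -/
noncomputable def trm (z : ℂ) (n : ℕ) : ℝ :=
  (1 + (n : ℝ) * ‖z‖) / ‖1 + (n : ℂ) * z‖ - 1

lemma abs_pos_of_ne {z : ℂ} (hne : ∀ n : ℕ, 1 + (n : ℂ) * z ≠ 0) (n : ℕ) :
    0 < ‖1 + (n : ℂ) * z‖ :=
  norm_pos_iff.mpr (hne n)

lemma abs_le_of_triangle (z : ℂ) (n : ℕ) :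
    ‖1 + (n : ℂ) * z‖ ≤ 1 + (n : ℝ) * ‖z‖ := by
  calc ‖1 + (n : ℂ) * z‖ ≤ ‖(1:ℂ)‖ + ‖(n : ℂ) * z‖ :=
        norm_add_le _ _
    _ = 1 + (n : ℝ) * ‖z‖ := by
        simp [map_mul, Complex.norm_natCast]

lemma trm_nonneg {z : ℂ} (hne : ∀ n : ℕ, 1 + (n : ℂ) * z ≠ 0) (n : ℕ) :
    0 ≤ trm z n := by
  unfold trm
  rw [sub_nonneg, le_div_iff₀ (abs_pos_of_ne hne n), one_mul]
  exact abs_le_of_triangle z n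

lemma re_lt_abs {z : ℂ} (hz : z ≠ 0) (hznr : ¬ ∃ s : ℝ, 0 ≤ s ∧ z = (s : ℂ)) :
    z.re < ‖z‖ := by
  rcases lt_or_eq_of_le (Complex.re_le_norm z) with h | h
  · exact h
  · exfalso
    have him : z.im = 0 := by
      have h2 : (‖z‖) ^ 2 = z.re ^ 2 + z.im ^ 2 := by
        rw [Complex.sq_norm, Complex.normSq_apply]; ring
      nlinarith [norm_nonneg z]
    apply hznr
    refine ⟨z.re, ?_, ?_⟩
    · rw [h]; exact norm_nonneg z
    · exact Complex.ext (by simp) (by simp [him])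

lemma sq_abs_one_add (z : ℂ) (n : ℕ) :
    (‖1 + (n : ℂ) * z‖) ^ 2
      = 1 + 2 * (n : ℝ) * z.re + (n : ℝ) ^ 2 * (‖z‖) ^ 2 := by
  rw [Complex.sq_norm, Complex.normSq_apply, Complex.sq_norm, Complex.normSq_apply]
  simp [Complex.add_re, Complex.add_im, Complex.mul_re, Complex.mul_im]
  ring

lemma trm_ge {z : ℂ} (hz : z ≠ 0) (hznr : ¬ ∃ s : ℝ, 0 ≤ s ∧ z = (s : ℂ))
    (hne : ∀ n : ℕ, 1 + (n : ℂ) * z ≠ 0) (n : ℕ) (hn : 1 ≤ n) :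
    (‖z‖ - z.re) / (1 + ‖z‖) ^ 2 * (1 / (n : ℝ)) ≤ trm z n := by
  set A : ℝ := 1 + (n : ℝ) * ‖z‖ with hA
  set B : ℝ := ‖1 + (n : ℂ) * z‖ with hB
  have hB0 : 0 < B := abs_pos_of_ne hne n
  have hBA : B ≤ A := abs_le_of_triangle z n
  have habs0 : 0 < ‖z‖ := norm_pos_iff.mpr hz
  have hA0 : 0 < A := by positivity
  have hn1 : (1 : ℝ) ≤ (n : ℝ) := by exact_mod_cast hn
  have hc0 : 0 < ‖z‖ - z.re := sub_pos.2 (re_lt_abs hz hznr)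
  have hsq : A ^ 2 - B ^ 2 = 2 * (n : ℝ) * (‖z‖ - z.re) := by
    rw [hB, sq_abs_one_add z n, hA]; ring
  have hAm : A ≤ (n : ℝ) * (1 + ‖z‖) := by
    rw [hA]; nlinarith
  have htrm : trm z n = (A - B) / B := by
    unfold trm
    rw [← hA, ← hB]
    field_simp
  rw [htrm]
  rw [div_mul_div_comm, div_le_div_iff₀ (by positivity) hB0]
  -- goal: (abs z - z.re) * 1 * B ≤ (A - B) * ((1 + abs z)^2 * n)
  have hAB : 0 < A + B := by linarith
  rw [← mul_le_mul_iff_of_pos_right hAB]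
  have hrhs : (A - B) * ((1 + ‖z‖) ^ 2 * (n : ℝ)) * (A + B)
      = (A ^ 2 - B ^ 2) * ((1 + ‖z‖) ^ 2 * (n : ℝ)) := by ring
  rw [hrhs, hsq]
  have h1 : A * A ≤ ((n : ℝ) * (1 + ‖z‖)) * ((n : ℝ) * (1 + ‖z‖)) :=
    mul_self_le_mul_self hA0.le hAm
  nlinarith [mul_le_mul_of_nonneg_left h1 hc0.le,
    mul_nonneg (mul_nonneg hc0.le (sub_nonneg.2 hBA)) hAB.le,
    mul_nonneg (mul_nonneg hc0.le hA0.le) (sub_nonneg.2 hBA)]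

end AuxAnalytic
section AuxDiverge

lemma tendsto_trm_sum {z : ℂ} (hz : z ≠ 0) (hznr : ¬ ∃ s : ℝ, 0 ≤ s ∧ z = (s : ℂ))
    (hne : ∀ n : ℕ, 1 + (n : ℂ) * z ≠ 0) :
    Filter.Tendsto (fun N : ℕ => ∑ n ∈ Finset.Ico 1 N, trm z n)
      Filter.atTop Filter.atTop := by
  set c := (‖z‖ - z.re) / (1 + ‖z‖) ^ 2 with hc
  have hc0 : 0 < c := div_pos (sub_pos.2 (re_lt_abs hz hznr)) (by positivity)
  have hharm := Real.tendsto_sum_range_one_div_nat_succ_atTop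
  have hsub : Filter.Tendsto (fun N : ℕ => N - 1) Filter.atTop Filter.atTop :=
    Filter.tendsto_sub_atTop_nat 1
  apply Filter.tendsto_atTop_mono ?_
    (Filter.Tendsto.const_mul_atTop hc0 (hharm.comp hsub))
  intro N
  simp only [Function.comp]
  rw [Finset.mul_sum, Finset.sum_Ico_eq_sum_range]
  apply Finset.sum_le_sum
  intro i _
  have h := trm_ge hz hznr hne (1 + i) (by omega)
  calc c * (1 / ((i : ℝ) + 1)) = c * (1 / ((1 + i : ℕ) : ℝ)) := by push_cast; ring
    _ ≤ trm z (1 + i) := h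

lemma one_add_sum_le_prod {ι : Type*} (s : Finset ι) (a : ι → ℝ)
    (h : ∀ i ∈ s, 0 ≤ a i) :
    1 + ∑ i ∈ s, a i ≤ ∏ i ∈ s, (1 + a i) := by
  induction s using Finset.cons_induction with
  | empty => simp
  | cons x s hx ih =>
    rw [Finset.prod_cons, Finset.sum_cons]
    have hs : ∀ i ∈ s, 0 ≤ a i := fun i hi => h i (Finset.mem_cons_of_mem hi)
    have hx0 : 0 ≤ a x := h x (Finset.mem_cons_self x s)
    have hsum : 0 ≤ ∑ i ∈ s, a i := Finset.sum_nonneg hs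
    nlinarith [ih hs]

end AuxDiverge

section AuxAmp

variable {z : ℂ} {t : ℕ → ℂ}

lemma abs_amp_pf (ht0 : t 0 = 1) (ht1 : t 1 = z) (ht : ∀ j : ℕ, 2 ≤ j → t j = 0)
    {n : ℕ} (f : ∀ m : Fin n, Option (Fin m.val)) :
    ‖amp t (pf f)‖
      = ∏ m : Fin n,
          ((if f m = none then 1 else ‖z‖) /
            ‖1 + (m.val : ℂ) * z‖) := by
  have hfac : ∀ m : Fin n, ‖
      lam t (pastOf (pf f) m).card (maxIn (pf f) (pastOf (pf f) m)).card / lam t m.val 0‖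
        = (if f m = none then 1 else ‖z‖) /
            ‖1 + (m.val : ℂ) * z‖ := by
    intro m
    rw [norm_div, lam_zero t ht0 ht1 ht m.val]
    congr 1
    cases hfm : f m with
    | none =>
      rw [maxIn_pf_none f m hfm, pastOf_pf, anc_none f m hfm]
      simp [lam_self t ht0, hfm]
    | some i =>
      rw [maxIn_pf_some f m i hfm, pastOf_pf, anc_some f m i hfm]
      have hcard : 1 ≤ (insert (⟨i.val, i.isLt.trans m.isLt⟩ : Fin n)
          (anc f ⟨i.val, i.isLt.trans m.isLt⟩)).card :=
        Finset.card_pos.2 ⟨_, Finset.mem_insert_self _ _⟩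
      rw [Finset.card_singleton, lam_one t ht1 ht _ hcard, if_neg (by simp [hfm])]
  unfold amp
  rw [norm_prod]
  calc ∏ m ∈ Finset.univ.filter (fun m : Fin n => 1 ≤ (m : ℕ)),
        ‖lam t (pastOf (pf f) m).card
          (maxIn (pf f) (pastOf (pf f) m)).card / lam t (m : ℕ) 0‖
      = ∏ m ∈ Finset.univ.filter (fun m : Fin n => 1 ≤ (m : ℕ)),
          ((if f m = none then 1 else ‖z‖) /
            ‖1 + (m.val : ℂ) * z‖) :=
        Finset.prod_congr rfl (fun m _ => hfac m)
    _ = ∏ m : Fin n, ((if f m = none then 1 else ‖z‖) /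
            ‖1 + (m.val : ℂ) * z‖) := by
        apply Finset.prod_subset (Finset.filter_subset _ _)
        intro m _ hm
        have hm0 : m.val = 0 := by
          simp only [Finset.mem_filter, Finset.mem_univ, true_and] at hm; omega
        have hfm : f m = none := by
          cases hfm : f m with
          | none => rfl
          | some i => exact absurd i.isLt (by omega)
        simp [hfm, hm0]

lemma sum_forest (ht0 : t 0 = 1) (ht1 : t 1 = z) (ht : ∀ j : ℕ, 2 ≤ j → t j = 0)
    (n : ℕ) :
    ∑ f : (∀ m : Fin n, Option (Fin m.val)), ‖amp t (pf f)‖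
      = ∏ m ∈ Finset.range n,
          ((1 + (m : ℝ) * ‖z‖) / ‖1 + (m : ℂ) * z‖) := by
  rw [Finset.sum_congr rfl (fun f _ => abs_amp_pf ht0 ht1 ht f)]
  rw [← Fintype.prod_sum (κ := fun m : Fin n => Option (Fin m.val))
      (f := fun m o => (if o = none then 1 else ‖z‖) /
        ‖1 + (m.val : ℂ) * z‖)]
  rw [← Fin.prod_univ_eq_prod_range
      (fun m => (1 + (m : ℝ) * ‖z‖) / ‖1 + (m : ℂ) * z‖) n]
  apply Finset.prod_congr rfl
  intro m _
  rw [univ_option, Finset.sum_insertNone]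
  simp only [if_pos, if_neg (Option.some_ne_none _)]
  rw [Finset.sum_const, Finset.card_univ, Fintype.card_fin, nsmul_eq_mul]
  rw [add_div, mul_div_assoc]

end AuxAmp
section AuxPartition

lemma cyl_nonempty {n : ℕ} (p : Fin n → Fin n → Prop) (hp : IsNode p) :
    ∃ r : Omega, r ∈ Cyl p := by
  refine ⟨⟨fun a b => ∃ (ha : a < n) (hb : b < n), p ⟨a, ha⟩ ⟨b, hb⟩, ?_, ?_, ?_⟩, ?_⟩
  · rintro i ⟨h1, h2, hpi⟩
    exact hp.1 _ hpi
  · rintro i j k ⟨hi, hj, hij⟩ ⟨hj', hk, hjk⟩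
    exact ⟨hi, hk, hp.2.1 _ _ _ hij hjk⟩
  · rintro i j ⟨hi, hj, hij⟩
    exact hp.2.2 _ _ hij
  · intro i j
    constructor
    · rintro ⟨hi, hj, h⟩; exact h
    · intro h; exact ⟨i.2, j.2, h⟩

lemma cyl_inj {n : ℕ} {p q : Fin n → Fin n → Prop} (hp : IsNode p)
    (h : Cyl p = Cyl q) : p = q := by
  obtain ⟨r, hr⟩ := cyl_nonempty p hp
  have hr' : r ∈ Cyl q := h ▸ hr
  funext i j
  exact propext ((hr i j).symm.trans (hr' i j))

lemma isPartition_nodes (n : ℕ) (hn : 1 ≤ n) :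
    IsPartition (Finset.image
      (fun p : {p : Fin n → Fin n → Prop // IsNode p} => Cyl p.1) Finset.univ) := by
  refine ⟨?_, ?_, ?_⟩
  · intro s hs
    obtain ⟨p, _, rfl⟩ := Finset.mem_image.1 hs
    exact InAlg.basic hn p.1 p.2
  · intro s hs t ht hst
    obtain ⟨p, _, rfl⟩ := Finset.mem_image.1 (Finset.mem_coe.1 hs)
    obtain ⟨q, _, rfl⟩ := Finset.mem_image.1 (Finset.mem_coe.1 ht)
    rw [Set.disjoint_left]
    intro r hrp hrq
    apply hst
    have : p.1 = q.1 := by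
      funext i j
      exact propext ((hrp i j).symm.trans (hrq i j))
    rw [this]
  · apply Set.eq_univ_of_forall
    intro r
    have hnode : IsNode (fun i j : Fin n => r.1 i.1 j.1) := by
      refine ⟨fun i => r.2.1 i.1, fun i j k hij hjk => r.2.2.1 _ _ _ hij hjk,
        fun i j hij => r.2.2.2 _ _ hij⟩
    refine Set.mem_sUnion.2 ⟨Cyl (fun i j : Fin n => r.1 i.1 j.1), ?_, ?_⟩
    · exact Finset.mem_coe.2 (Finset.mem_image.2 ⟨⟨_, hnode⟩, Finset.mem_univ _, rfl⟩)
    · intro i j; exact Iff.rfl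

end AuxPartition
section AuxZeta

variable {z : ℂ} {t : ℕ → ℂ}

lemma sumA (ht0 : t 0 = 1) (ht1 : t 1 = z) (ht : ∀ j : ℕ, 2 ≤ j → t j = 0) (n : ℕ) :
    ∑ k ∈ Finset.range (n + 1), (n.choose k : ℝ) * ‖t k‖
      = 1 + (n : ℝ) * ‖z‖ := by
  have hsub : Finset.range (min 2 (n + 1)) ⊆ Finset.range (n + 1) := by
    apply Finset.range_subset_range.2; omega
  rw [← Finset.sum_subset hsub (by
    intro k hk hk2
    simp only [Finset.mem_range] at hk hk2
    rw [ht k (by omega)]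
    simp)]
  rcases Nat.eq_zero_or_pos n with rfl | hn
  · simp [ht0]
  · rw [show min 2 (n + 1) = 2 by omega]
    rw [Finset.sum_range_succ, Finset.sum_range_succ, Finset.sum_range_zero]
    simp [ht0, ht1, Nat.choose_one_right]

lemma sumC (ht0 : t 0 = 1) (ht1 : t 1 = z) (ht : ∀ j : ℕ, 2 ≤ j → t j = 0) (n : ℕ) :
    ‖t 0‖ + ∑ w ∈ Finset.Icc 1 n, ‖lam t w 1‖
      = 1 + (n : ℝ) * ‖z‖ := by
  rw [ht0]
  rw [Finset.sum_congr rfl (fun w hw =>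
    congrArg (‖·‖) (lam_one t ht1 ht w (Finset.mem_Icc.1 hw).1))]
  rw [Finset.sum_const, Nat.card_Icc, nsmul_eq_mul]
  simp [mul_comm]

lemma zetaA_eq (ht0 : t 0 = 1) (ht1 : t 1 = z) (ht : ∀ j : ℕ, 2 ≤ j → t j = 0) (n : ℕ) :
    zetaA t n = (1 + (n : ℝ) * ‖z‖) / ‖1 + (n : ℂ) * z‖ - 1 := by
  unfold zetaA
  rw [lam_zero t ht0 ht1 ht n, sumA ht0 ht1 ht n]

lemma zetaC_eq (ht0 : t 0 = 1) (ht1 : t 1 = z) (ht : ∀ j : ℕ, 2 ≤ j → t j = 0) (n : ℕ) :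
    zetaC t n = (1 + (n : ℝ) * ‖z‖) / ‖1 + (n : ℂ) * z‖ - 1 := by
  unfold zetaC
  rw [lam_zero t ht0 ht1 ht n, sumC ht0 ht1 ht n]

end AuxZeta
/-- single coupling t_1 = z, z ≠ 0 not a nonnegative real: ζ_n^a = ζ_n^c
has the stated closed form, the series Σ_{n≥1} ((1+n|z|)/|1+nz| − 1) diverges, and the
associated ℂSG measure is not of bounded variation. -/
theorem statement_12 (z : ℂ) (hz : z ≠ 0) (hznr : ¬ ∃ s : ℝ, 0 ≤ s ∧ z = (s : ℂ))
    (t : ℕ → ℂ) (ht0 : t 0 = 1) (ht1 : t 1 = z)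
    (ht : ∀ j : ℕ, 2 ≤ j → t j = 0)
    (hne : ∀ n : ℕ, 1 + (n : ℂ) * z ≠ 0) :
    (∀ n : ℕ, zetaA t n =
        (1 + (n : ℝ) * ‖z‖) / ‖1 + (n : ℂ) * z‖ - 1 ∧
      zetaC t n =
        (1 + (n : ℝ) * ‖z‖) / ‖1 + (n : ℂ) * z‖ - 1) ∧
    ¬ (∃ L : ℝ, Filter.Tendsto (fun N : ℕ => ∑ n ∈ Finset.Ico 1 N,
        ((1 + (n : ℝ) * ‖z‖) / ‖1 + (n : ℂ) * z‖ - 1))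
        Filter.atTop (nhds L)) ∧
    (∀ μ : Set Omega → ℂ, IsCSG t μ → ¬ BoundedVariation μ) := by
  refine ⟨fun n => ⟨zetaA_eq ht0 ht1 ht n, zetaC_eq ht0 ht1 ht n⟩, ?_, ?_⟩
  · rintro ⟨L, hL⟩
    exact not_tendsto_atTop_of_tendsto_nhds hL (tendsto_trm_sum hz hznr hne)
  · intro μ hμ hbv
    obtain ⟨M, hM⟩ := hbv
    obtain ⟨N, hNM, hN1⟩ :=
      (((tendsto_trm_sum hz hznr hne).eventually_gt_atTop M).and
        (Filter.eventually_ge_atTop 1)).exists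
    have hsum := hM (Finset.image
      (fun p : {p : Fin N → Fin N → Prop // IsNode p} => Cyl p.1) Finset.univ)
      (isPartition_nodes N hN1)
    rw [Finset.sum_image (fun p _ q _ h => Subtype.ext (cyl_inj p.2 h))] at hsum
    have e_inj : Function.Injective (fun f : (∀ m : Fin N, Option (Fin m.val)) =>
        (⟨pf f, isNode_pf f⟩ : {p : Fin N → Fin N → Prop // IsNode p})) :=
      fun f g h => pf_injective (congrArg Subtype.val h)
    have hlow : ∑ f : (∀ m : Fin N, Option (Fin m.val)),
        ‖μ (Cyl (pf f))‖
          ≤ ∑ p : {p : Fin N → Fin N → Prop // IsNode p},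
              ‖μ (Cyl p.1)‖ := by
      have himg := Finset.sum_image
        (s := (Finset.univ : Finset (∀ m : Fin N, Option (Fin m.val))))
        (g := fun f => (⟨pf f, isNode_pf f⟩ : {p : Fin N → Fin N → Prop // IsNode p}))
        (f := fun p : {p : Fin N → Fin N → Prop // IsNode p} => ‖μ (Cyl p.1)‖)
        (fun f _ g _ h => e_inj h)
      calc ∑ f : (∀ m : Fin N, Option (Fin m.val)), ‖μ (Cyl (pf f))‖
          = ∑ p ∈ Finset.image
              (fun f => (⟨pf f, isNode_pf f⟩ : {p : Fin N → Fin N → Prop // IsNode p}))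
              Finset.univ, ‖μ (Cyl p.1)‖ := himg.symm
        _ ≤ _ := Finset.sum_le_sum_of_subset_of_nonneg (Finset.subset_univ _)
            (fun p _ _ => norm_nonneg _)
    have hcalc : ∑ f : (∀ m : Fin N, Option (Fin m.val)), ‖μ (Cyl (pf f))‖
        = ∏ m ∈ Finset.range N,
            ((1 + (m : ℝ) * ‖z‖) / ‖1 + (m : ℂ) * z‖) := by
      rw [Finset.sum_congr rfl
        (fun f _ => by rw [hμ.2 N hN1 (pf f) (isNode_pf f)])]
      exact sum_forest ht0 ht1 ht N
    have hprod : (1 : ℝ) + ∑ m ∈ Finset.range N, trm z m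
        ≤ ∏ m ∈ Finset.range N,
            ((1 + (m : ℝ) * ‖z‖) / ‖1 + (m : ℂ) * z‖) := by
      calc 1 + ∑ m ∈ Finset.range N, trm z m
          ≤ ∏ m ∈ Finset.range N, (1 + trm z m) :=
            one_add_sum_le_prod _ _ (fun m _ => trm_nonneg hne m)
        _ = _ := Finset.prod_congr rfl (fun m _ => by unfold trm; ring)
    have hIco : ∑ n ∈ Finset.Ico 1 N, trm z n ≤ ∑ m ∈ Finset.range N, trm z m := by
      apply Finset.sum_le_sum_of_subset_of_nonneg
      · intro x hx; simp only [Finset.mem_Ico, Finset.mem_range] at hx ⊢; omega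
      · exact fun m _ _ => trm_nonneg hne m
    linarith

end
end

section
/- Let k_0 ≥ 1 be an integer, φ_0 ∈ ℝ, and t_1, …, t_{k_0} ∈ ℂ arbitrary, with t_0 = 1. Suppose that for all k > k_0, t_k = s_k·e^{iφ_0}, where either (i) s_k = s^k for a fixed real s > 0, or (ii) s_k = 2^{2k}. Assume λ(n,0) ≠ 0 for all n. Then the series Σ_{n≥1} ζ_n^a converges (hence the associated ℂSG measure is of bounded variation). -/
open MeasureTheory Filter Finset

attribute [local instance] Classical.propDecidable

noncomputable section

lemma lam_zero_s14 (t : ℕ → ℂ) (n : ℕ) :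
    lam t n 0 = ∑ k ∈ Finset.range (n + 1), (n.choose k : ℂ) * t k := by
  unfold lam
  rw [show Finset.Icc 0 n = Finset.range (n+1) by ext x; simp [Nat.lt_succ_iff]]
  simp

lemma abs_lam_le (t : ℕ → ℂ) (n : ℕ) :
    ‖lam t n 0‖ ≤ ∑ k ∈ Finset.range (n + 1), (n.choose k : ℝ) * ‖t k‖ := by
  rw [lam_zero_s14]
  refine (norm_sum_le _ _).trans_eq ?_
  refine Finset.sum_congr rfl fun k _ => ?_
  simp [map_mul]

lemma zetaA_nonneg (t : ℕ → ℂ) (n : ℕ) (h : lam t n 0 ≠ 0) : 0 ≤ zetaA t n := by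
  have h0 : 0 < ‖lam t n 0‖ := norm_pos_iff.mpr h
  have := abs_lam_le t n
  unfold zetaA
  rw [sub_nonneg, le_div_iff₀ h0, one_mul]
  exact this


lemma zetaA_summable (k0 : ℕ) (t : ℕ → ℂ) (E : ℂ) (hE : ‖E‖ = 1)
    (S : ℕ → ℝ) (hS : ∀ k, k0 < k → 0 < S k ∧ t k = (S k : ℂ) * E)
    (hlam : ∀ n, lam t n 0 ≠ 0) : Summable (zetaA t) := by
  classical
  set r := k0 + 2 with hr
  set Ca : ℝ := ∑ k ∈ Finset.range (k0 + 1), ‖t k‖ with hCa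
  have hCa0 : 0 ≤ Ca := Finset.sum_nonneg fun k _ => norm_nonneg _
  set c : ℝ := S r with hc
  have hc0 : 0 < c := (hS r (by omega)).1
  set cB : ℝ := c / ((r.factorial : ℝ) * 2 ^ r) with hcB
  have hcB0 : 0 < cB := by
    apply div_pos hc0
    positivity
  set K : ℝ := 4 * Ca / cB with hK
  set a : ℕ → ℝ := fun n => ∑ k ∈ Finset.range (k0 + 1), (n.choose k : ℝ) * ‖t k‖
    with ha
  set B : ℕ → ℝ := fun n => ∑ k ∈ Finset.Ico (k0 + 1) (n + 1), (n.choose k : ℝ) * S k with hB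
  set A : ℕ → ℂ := fun n => ∑ k ∈ Finset.range (k0 + 1), (n.choose k : ℂ) * t k with hA
  have ha0 : ∀ n, 0 ≤ a n := fun n =>
    Finset.sum_nonneg fun k _ => mul_nonneg (by positivity) (norm_nonneg _)
  have hB0 : ∀ n, 0 ≤ B n := by
    intro n
    apply Finset.sum_nonneg
    intro k hk
    rw [Finset.mem_Ico] at hk
    exact mul_nonneg (by positivity) (hS k (by omega)).1.le
  -- a n ≤ Ca * n ^ k0
  have haux : ∀ n : ℕ, 1 ≤ n → a n ≤ Ca * (n : ℝ) ^ k0 := by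
    intro n hn
    rw [hCa, Finset.sum_mul]
    apply Finset.sum_le_sum
    intro k hk
    rw [Finset.mem_range, Nat.lt_succ_iff] at hk
    rw [mul_comm (‖t k‖)]
    apply mul_le_mul_of_nonneg_right _ (norm_nonneg _)
    calc (n.choose k : ℝ) ≤ ((n ^ k : ℕ) : ℝ) := by exact_mod_cast Nat.choose_le_pow n k
    _ ≤ (n : ℝ) ^ k0 := by
        push_cast
        exact pow_le_pow_right₀ (by exact_mod_cast hn) hk
  -- B n ≥ cB * n ^ r for n ≥ 2r
  have hBlow : ∀ n : ℕ, 2 * r ≤ n → cB * (n : ℝ) ^ r ≤ B n := by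
    intro n hn
    have h1 : (n.choose r : ℝ) * c ≤ B n := by
      apply Finset.single_le_sum (f := fun k => (n.choose k : ℝ) * S k)
      · intro k hk
        rw [Finset.mem_Ico] at hk
        exact mul_nonneg (by positivity) (hS k (by omega)).1.le
      · rw [Finset.mem_Ico]; omega
    refine le_trans ?_ h1
    have h2 : ((n + 1 - r : ℕ) : ℝ) ^ r / (r.factorial : ℝ) ≤ (n.choose r : ℝ) :=
      Nat.pow_le_choose r n
    have h3 : (n : ℝ) / 2 ≤ ((n + 1 - r : ℕ) : ℝ) := by
      have : n ≤ 2 * (n + 1 - r) := by omega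
      have := (Nat.cast_le (α := ℝ)).2 this
      push_cast at this ⊢
      linarith
    have h4 : (n : ℝ) ^ r / 2 ^ r / (r.factorial : ℝ) ≤ (n.choose r : ℝ) := by
      refine le_trans ?_ h2
      apply div_le_div_of_nonneg_right _ (by positivity)
      rw [← div_pow]
      exact pow_le_pow_left₀ (by positivity) h3 r
    calc cB * (n : ℝ) ^ r = (n : ℝ) ^ r / 2 ^ r / (r.factorial : ℝ) * c := by
          rw [hcB]; field_simp
    _ ≤ (n.choose r : ℝ) * c := mul_le_mul_of_nonneg_right h4 hc0.le
  -- the splittings, for all relevant n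
  have hlsplit : ∀ n : ℕ, k0 ≤ n → lam t n 0 = A n + (B n : ℂ) * E := by
    intro n hn
    rw [lam_zero_s14, ← Finset.sum_range_add_sum_Ico _ (show k0 + 1 ≤ n + 1 by omega)]
    congr 1
    rw [hB]
    push_cast
    rw [Finset.sum_mul]
    apply Finset.sum_congr rfl
    intro k hk
    rw [Finset.mem_Ico] at hk
    rw [(hS k (by omega)).2]
    ring
  have htS : ∀ k, k0 < k → ‖t k‖ = S k := by
    intro k hk
    rw [(hS k hk).2, norm_mul, hE, mul_one, Complex.norm_real, Real.norm_eq_abs, abs_of_pos (hS k hk).1]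
  have hAle : ∀ n, ‖A n‖ ≤ a n := by
    intro n
    refine (norm_sum_le _ _).trans_eq ?_
    apply Finset.sum_congr rfl
    intro k _
    rw [norm_mul, Complex.norm_natCast]
  -- fix the Ico part of hNsplit': the |t k| vs S k
  have hNB : ∀ n : ℕ, k0 ≤ n →
      (∑ k ∈ Finset.Ico (k0 + 1) (n + 1), (n.choose k : ℝ) * ‖t k‖) = B n := by
    intro n hn
    rw [hB]
    apply Finset.sum_congr rfl
    intro k hk
    rw [Finset.mem_Ico] at hk
    rw [htS k (by omega)]
  have hNsplit : ∀ n : ℕ, k0 ≤ n →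
      (∑ k ∈ Finset.range (n + 1), (n.choose k : ℝ) * ‖t k‖) = a n + B n := by
    intro n hn
    rw [← Finset.sum_range_add_sum_Ico _ (show k0 + 1 ≤ n + 1 by omega), hNB n hn]
  clear hNB htS
  clear_value r Ca c cB K a B A
  clear hCa hc hcB ha hB hA hS
  -- key estimate
  have key : ∀ n : ℕ, 2 * r ≤ n → 2 * Ca / cB ≤ (n : ℝ) → zetaA t n ≤ K * (1 / (n : ℝ) ^ 2) := by
    intro n hn1 hn2
    have hn0 : (1 : ℕ) ≤ n := by omega
    have hnR : (1 : ℝ) ≤ (n : ℝ) := by exact_mod_cast hn0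
    have hnpos : (0 : ℝ) < (n : ℝ) := by linarith
    have hk0n : k0 ≤ n := by omega
    have hDge : B n - a n ≤ ‖lam t n 0‖ := by
      have h5 : ‖(B n : ℂ) * E‖ - ‖A n‖ ≤ ‖(B n : ℂ) * E + A n‖ := by
        have := norm_add_le ((B n : ℂ) * E + A n) (-A n)
        rw [norm_neg, add_neg_cancel_right] at this
        linarith
      have hBabs : ‖(B n : ℂ) * E‖ = B n := by
        rw [norm_mul, hE, mul_one, Complex.norm_real, Real.norm_eq_abs, abs_of_nonneg (hB0 n)]
      rw [hBabs] at h5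
      have h6 := hAle n
      calc B n - a n ≤ B n - ‖A n‖ := by linarith
      _ ≤ ‖(B n : ℂ) * E + A n‖ := h5
      _ = ‖lam t n 0‖ := by rw [hlsplit n hk0n, add_comm]
    have hBn : cB * (n : ℝ) ^ r ≤ B n := hBlow n hn1
    have han : a n ≤ Ca * (n : ℝ) ^ k0 := haux n hn0
    have hpowsplit : (n : ℝ) ^ r = (n : ℝ) ^ k0 * (n : ℝ) ^ 2 := by
      rw [hr, pow_add]
    have hn2' : 2 * Ca / cB ≤ (n : ℝ) ^ 2 := by
      calc 2 * Ca / cB ≤ (n : ℝ) := hn2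
      _ ≤ (n : ℝ) ^ 2 := by nlinarith
    have hhalf : a n ≤ cB / 2 * (n : ℝ) ^ r := by
      calc a n ≤ Ca * (n : ℝ) ^ k0 := han
      _ ≤ cB / 2 * (n : ℝ) ^ 2 * (n : ℝ) ^ k0 := by
          apply mul_le_mul_of_nonneg_right _ (by positivity)
          rw [div_le_iff₀ hcB0] at hn2'
          linarith
      _ = cB / 2 * (n : ℝ) ^ r := by rw [hpowsplit]; ring
    have hposr : (0:ℝ) < cB / 2 * (n : ℝ) ^ r := by
      exact mul_pos (by linarith) (pow_pos hnpos r)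
    have hpos : 0 < B n - a n := by linarith
    have hD0 : 0 < ‖lam t n 0‖ := norm_pos_iff.mpr (hlam n)
    have hz : zetaA t n ≤ 2 * a n / (B n - a n) := by
      unfold zetaA
      rw [hNsplit n hk0n, sub_le_iff_le_add, div_le_iff₀ hD0]
      have hnn : 0 ≤ 2 * a n / (B n - a n) := div_nonneg (by linarith [ha0 n]) hpos.le
      have h2 : 2 * a n / (B n - a n) * (B n - a n) ≤
          2 * a n / (B n - a n) * ‖lam t n 0‖ :=
        mul_le_mul_of_nonneg_left hDge hnn
      rw [div_mul_cancel₀ _ (ne_of_gt hpos)] at h2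
      calc a n + B n = 2 * a n + (B n - a n) := by ring
      _ ≤ 2 * a n / (B n - a n) * ‖lam t n 0‖ + ‖lam t n 0‖ := by
          linarith
      _ = (2 * a n / (B n - a n) + 1) * ‖lam t n 0‖ := by ring
    have hfin : 2 * a n / (B n - a n) ≤ K * (1 / (n : ℝ) ^ 2) := by
      have hnum : 2 * a n ≤ 2 * (Ca * (n : ℝ) ^ k0) := by linarith
      have hden : cB / 2 * (n : ℝ) ^ r ≤ B n - a n := by linarith
      have hnum0 : 0 ≤ 2 * (Ca * (n : ℝ) ^ k0) := by
        have := pow_pos hnpos k0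
        nlinarith
      calc 2 * a n / (B n - a n) ≤ 2 * (Ca * (n : ℝ) ^ k0) / (cB / 2 * (n : ℝ) ^ r) :=
            div_le_div₀ hnum0 hnum hposr hden
      _ = K * (1 / (n : ℝ) ^ 2) := by
            rw [hK, hpowsplit]
            have h1 : (n : ℝ) ^ k0 ≠ 0 := by positivity
            have h2 : (n : ℝ) ^ 2 ≠ 0 := by positivity
            have h3 : cB ≠ 0 := ne_of_gt hcB0
            field_simp
            ring
    exact hz.trans hfin
  -- conclude summability
  set n0 : ℕ := max (2 * r) (Nat.ceil (2 * Ca / cB) + 1) with hn0def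
  have hn0a : 2 * r ≤ n0 := le_max_left _ _
  have hn0b : Nat.ceil (2 * Ca / cB) + 1 ≤ n0 := le_max_right _ _
  clear_value n0
  clear hn0def
  rw [← summable_nat_add_iff n0]
  have hmaj : Summable (fun n : ℕ => K * (1 / ((n + n0 : ℕ) : ℝ) ^ 2)) := by
    have h0 : Summable (fun n : ℕ => (1 / ((n : ℝ)) ^ 2 : ℝ)) :=
      Real.summable_one_div_nat_pow.mpr one_lt_two
    have h1 : Summable (fun n : ℕ => 1 / (((n + n0 : ℕ)) : ℝ) ^ 2) :=
      (summable_nat_add_iff (f := fun n : ℕ => 1 / (n : ℝ) ^ 2) n0).2 h0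
    exact h1.mul_left K
  apply Summable.of_nonneg_of_le _ _ hmaj
  · intro n
    exact zetaA_nonneg t (n + n0) (hlam _)
  · intro n
    apply key
    · omega
    · have h1 : (2 * Ca / cB) ≤ ((Nat.ceil (2 * Ca / cB) + 1 : ℕ) : ℝ) := by
        push_cast
        have := Nat.le_ceil (2 * Ca / cB)
        linarith
      refine h1.trans ?_
      have h2 : (Nat.ceil (2 * Ca / cB) + 1 : ℕ) ≤ n + n0 := by omega
      exact_mod_cast h2

abbrev Node (n : ℕ) := {p : Fin n → Fin n → Prop // IsNode p}

/-- the n-truncation of a causal set -/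
def phi (n : ℕ) (x : Omega) : Fin n → Fin n → Prop := fun i j => x.1 i.1 j.1

lemma phi_isNode (n : ℕ) (x : Omega) : IsNode (phi n x) := by
  obtain ⟨hirr, htr, hlt⟩ := x.2
  exact ⟨fun i => hirr i.1, fun i j k hij hjk => htr _ _ _ hij hjk, fun i j h => hlt _ _ h⟩

lemma mem_Cyl {n : ℕ} (p : Fin n → Fin n → Prop) (x : Omega) :
    x ∈ Cyl p ↔ ∀ i j : Fin n, x.1 i.1 j.1 ↔ p i j := Iff.rfl

lemma mem_Cyl_phi (n : ℕ) (x : Omega) : x ∈ Cyl (phi n x) := by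
  intro i j; rfl

lemma cyl_eq_iff {n : ℕ} (p q : Fin n → Fin n → Prop) (x : Omega)
    (hp : x ∈ Cyl p) (hq : x ∈ Cyl q) : p = q := by
  funext i j
  exact propext (((hp i j).symm.trans (hq i j)))

lemma Cyl_nonempty {n : ℕ} (p : Fin n → Fin n → Prop) (hp : IsNode p) :
    (Cyl p).Nonempty := by
  classical
  refine ⟨⟨fun i j => ∃ hi : i < n, ∃ hj : j < n, p ⟨i, hi⟩ ⟨j, hj⟩, ?_, ?_, ?_⟩, ?_⟩
  · rintro i ⟨hi, hj, hp'⟩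
    exact hp.1 _ hp'
  · rintro i j k ⟨hi, hj, hij⟩ ⟨hj', hk, hjk⟩
    refine ⟨hi, hk, hp.2.1 _ ⟨j, hj⟩ _ hij ?_⟩
    convert hjk using 2
  · rintro i j ⟨hi, hj, h⟩
    exact hp.2.2 _ _ h
  · intro i j
    constructor
    · rintro ⟨hi, hj, h⟩
      convert h using 2 <;> exact (Fin.ext rfl)
    · intro h
      exact ⟨i.2, j.2, by convert h using 2 <;> exact (Fin.ext rfl)⟩

lemma Cyl_disjoint {n : ℕ} (p q : Fin n → Fin n → Prop) (h : p ≠ q) :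
    Disjoint (Cyl p) (Cyl q) := by
  rw [Set.disjoint_left]
  intro x hxp hxq
  exact h (cyl_eq_iff p q x hxp hxq)

/-- s only depends on the first n points -/
def Meas (n : ℕ) (s : Set Omega) : Prop :=
  ∀ x y : Omega, (∀ i j : Fin n, (x.1 i.1 j.1 ↔ y.1 i.1 j.1)) → (x ∈ s ↔ y ∈ s)

lemma Meas.mono {m n : ℕ} (h : m ≤ n) {s : Set Omega} (hs : Meas m s) : Meas n s := by
  intro x y hxy
  apply hs
  intro i j
  exact hxy ⟨i.1, lt_of_lt_of_le i.2 h⟩ ⟨j.1, lt_of_lt_of_le j.2 h⟩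

lemma InAlg.meas {s : Set Omega} (h : InAlg s) : ∃ n, 1 ≤ n ∧ Meas n s := by
  induction h with
  | @basic n hn p hp =>
      exact ⟨n, hn, fun x y hxy => by
        rw [mem_Cyl, mem_Cyl]
        constructor
        · intro hx i j; rw [← hx i j]; exact (hxy i j).symm
        · intro hy i j; rw [← hy i j]; exact hxy i j⟩
  | univ => exact ⟨1, le_refl _, fun x y _ => Iff.rfl⟩
  | compl s hs ih =>
      obtain ⟨n, hn, hm⟩ := ih
      exact ⟨n, hn, fun x y h => by simp only [Set.mem_compl_iff, hm x y h]⟩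
  | union s t hs ht ihs iht =>
      obtain ⟨n, hn, hmn⟩ := ihs
      obtain ⟨m, hm, hmm⟩ := iht
      refine ⟨max n m, le_trans hn (le_max_left _ _), fun x y h => ?_⟩
      simp only [Set.mem_union,
        hmn.mono (le_max_left n m) x y h, (hmm.mono (le_max_right n m)) x y h]

def Tval (t : ℕ → ℂ) (n : ℕ) : ℝ := ∑ p : Node n, ‖amp t p.1‖

lemma InAlg_empty : InAlg (∅ : Set Omega) := by
  have := InAlg.compl _ InAlg.univ
  rwa [Set.compl_univ] at this

lemma mu_empty (μ : Set Omega → ℂ) (hμ : FinitelyAdditive μ) : μ ∅ = 0 := by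
  have := hμ ∅ ∅ InAlg_empty InAlg_empty (disjoint_bot_left)
  rw [Set.union_empty] at this
  have h2 : μ ∅ + μ ∅ - μ ∅ = μ ∅ - μ ∅ := by rw [← this]
  simpa using h2

lemma InAlg_biUnion {n : ℕ} (hn : 1 ≤ n) (F : Finset (Node n)) :
    InAlg (⋃ p ∈ F, Cyl p.1) := by
  classical
  induction F using Finset.induction with
  | empty => simpa using InAlg_empty
  | insert _ _ hq ih =>
      rw [Finset.set_biUnion_insert]
      exact InAlg.union _ _ (InAlg.basic hn _ (by exact Subtype.prop _)) ih

lemma mu_biUnion {n : ℕ} (hn : 1 ≤ n) (μ : Set Omega → ℂ) (hμ : FinitelyAdditive μ)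
    (F : Finset (Node n)) :
    μ (⋃ p ∈ F, Cyl p.1) = ∑ p ∈ F, μ (Cyl p.1) := by
  classical
  induction F using Finset.induction with
  | empty => simpa using mu_empty μ hμ
  | @insert q F hq ih =>
      rw [Finset.set_biUnion_insert, Finset.sum_insert hq, ← ih]
      apply hμ _ _ (InAlg.basic hn _ (Subtype.prop _)) (InAlg_biUnion hn F)
      apply Set.disjoint_iUnion_right.2
      intro p
      apply Set.disjoint_iUnion_right.2
      intro hp
      apply Cyl_disjoint
      intro hqp
      exact hq (by rwa [show q = p from Subtype.ext hqp])

lemma decomp {n : ℕ} (s : Set Omega) (hs : Meas n s) :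
    s = ⋃ p ∈ Finset.univ.filter (fun p : Node n => Cyl p.1 ⊆ s), Cyl p.1 := by
  classical
  apply Set.Subset.antisymm
  · intro x hx
    have hsub : Cyl (phi n x) ⊆ s := by
      intro y hy
      exact (hs y x (fun i j => hy i j)).2 hx
    rw [Set.mem_iUnion]
    refine ⟨⟨phi n x, phi_isNode n x⟩, ?_⟩
    rw [Set.mem_iUnion]
    refine ⟨?_, mem_Cyl_phi n x⟩
    simp only [Finset.mem_filter, Finset.mem_univ, true_and]
    exact hsub
  · intro x hx
    rw [Set.mem_iUnion] at hx
    obtain ⟨p, hp⟩ := hx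
    rw [Set.mem_iUnion] at hp
    obtain ⟨hp1, hp2⟩ := hp
    rw [Finset.mem_filter] at hp1
    exact hp1.2 hp2

lemma mu_bound {n : ℕ} (hn : 1 ≤ n) (t : ℕ → ℂ) (μ : Set Omega → ℂ) (hμ : IsCSG t μ)
    (s : Set Omega) (hs : Meas n s) :
    ‖μ s‖ ≤
      ∑ p ∈ Finset.univ.filter (fun p : Node n => Cyl p.1 ⊆ s), ‖amp t p.1‖ := by
  classical
  conv_lhs => rw [decomp s hs]
  rw [mu_biUnion hn μ hμ.1]
  refine (norm_sum_le _ _).trans_eq ?_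
  apply Finset.sum_congr rfl
  intro p _
  rw [hμ.2 n hn p.1 p.2]

lemma partition_bound (t : ℕ → ℂ) (μ : Set Omega → ℂ) (hμ : IsCSG t μ)
    (π : Finset (Set Omega)) (hπ : IsPartition π) :
    ∃ n : ℕ, 1 ≤ n ∧ ∑ s ∈ π, ‖μ s‖ ≤ Tval t n := by
  classical
  -- find a common n
  have hex : ∀ (ρ : Finset (Set Omega)), (∀ s ∈ ρ, InAlg s) →
      ∃ n : ℕ, 1 ≤ n ∧ ∀ s ∈ ρ, Meas n s := by
    intro ρ halg
    induction ρ using Finset.induction with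
    | empty => exact ⟨1, le_refl _, fun s hs => absurd hs (Finset.notMem_empty s)⟩
    | @insert s ρ hs ih =>
        obtain ⟨n, hn, hmeas⟩ := ih (fun u hu => halg u (Finset.mem_insert_of_mem hu))
        obtain ⟨m, hm, hsm⟩ := (halg s (Finset.mem_insert_self s ρ)).meas
        refine ⟨max n m, le_trans hn (le_max_left _ _), fun u hu => ?_⟩
        rcases Finset.mem_insert.1 hu with h | h
        · subst h; exact hsm.mono (le_max_right _ _)
        · exact (hmeas u h).mono (le_max_left _ _)
  obtain ⟨n, hn, hmeas⟩ := hex π hπ.1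
  refine ⟨n, hn, ?_⟩
  set F : Set Omega → Finset (Node n) :=
    fun s => Finset.univ.filter (fun p : Node n => Cyl p.1 ⊆ s) with hF
  have hstep : ∑ s ∈ π, ‖μ s‖ ≤ ∑ s ∈ π, ∑ p ∈ F s, ‖amp t p.1‖ :=
    Finset.sum_le_sum fun s hs => mu_bound hn t μ hμ s (hmeas s hs)
  refine hstep.trans ?_
  have hdisj : (↑π : Set (Set Omega)).PairwiseDisjoint F := by
    intro s1 h1 s2 h2 hne
    rw [Function.onFun, Finset.disjoint_left]
    intro p hp1 hp2
    rw [hF, Finset.mem_filter] at hp1 hp2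
    have hd := hπ.2.1 h1 h2 hne
    obtain ⟨x, hx⟩ := Cyl_nonempty p.1 p.2
    exact Set.disjoint_left.1 hd (hp1.2 hx) (hp2.2 hx)
  rw [← Finset.sum_biUnion hdisj]
  apply Finset.sum_le_sum_of_subset_of_nonneg (Finset.subset_univ _)
  intro p _ _
  exact norm_nonneg _

lemma exists_max_above {n : ℕ} (c : Fin n → Fin n → Prop) (hc : IsNode c) (I : Finset (Fin n)) :
    ∀ x ∈ I, ∃ y ∈ maxIn c I, y = x ∨ c x y := by
  classical
  have main : ∀ k : ℕ, ∀ x ∈ I, n - x.1 ≤ k → ∃ y ∈ maxIn c I, y = x ∨ c x y := by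
    intro k
    induction k with
    | zero =>
        intro x hx hle
        have := x.2
        omega
    | succ k ih =>
        intro x hx hle
        by_cases h : ∀ j ∈ I, ¬ c x j
        · exact ⟨x, Finset.mem_filter.2 ⟨hx, h⟩, Or.inl rfl⟩
        · push_neg at h
          obtain ⟨j, hj, hcj⟩ := h
          have hlt : x.1 < j.1 := hc.2.2 _ _ hcj
          have hjn := j.2
          obtain ⟨y, hy, hy2⟩ := ih j hj (by omega)
          refine ⟨y, hy, Or.inr ?_⟩
          rcases hy2 with rfl | h2
          · exact hcj
          · exact hc.2.1 _ _ _ hcj h2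
  intro x hx
  exact main n x hx (by omega)

lemma ideal_determined {n : ℕ} (c : Fin n → Fin n → Prop) (hc : IsNode c)
    {I J : Finset (Fin n)} (hI : isIdeal c I) (hmax : maxIn c I ⊆ J) (hJ : J ⊆ I) :
    ∀ x, x ∈ I ↔ (x ∈ J ∨ ∃ j ∈ J, c x j) := by
  intro x
  constructor
  · intro hx
    obtain ⟨y, hy, hy2⟩ := exists_max_above c hc I x hx
    rcases hy2 with rfl | h2
    · exact Or.inl (hmax hy)
    · exact Or.inr ⟨y, hmax hy, h2⟩
  · rintro (hx | ⟨j, hj, hcj⟩)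
    · exact hJ hx
    · exact hI j (hJ hj) x hcj

lemma ideal_eq_of_sandwich {n : ℕ} (c : Fin n → Fin n → Prop) (hc : IsNode c)
    {I1 I2 J : Finset (Fin n)} (h1 : isIdeal c I1) (h2 : isIdeal c I2)
    (hm1 : maxIn c I1 ⊆ J) (hJ1 : J ⊆ I1) (hm2 : maxIn c I2 ⊆ J) (hJ2 : J ⊆ I2) :
    I1 = I2 := by
  ext x
  rw [ideal_determined c hc h1 hm1 hJ1 x, ideal_determined c hc h2 hm2 hJ2 x]

lemma card_sandwich {α : Type*} [Fintype α] [DecidableEq α] (I Mx : Finset α) (hMx : Mx ⊆ I)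
    (k : ℕ) (hk1 : Mx.card ≤ k) :
    ((Finset.univ.powersetCard k).filter (fun J => Mx ⊆ J ∧ J ⊆ I)).card
      = (I.card - Mx.card).choose (k - Mx.card) := by
  classical
  rw [← Finset.card_sdiff_of_subset hMx, ← Finset.card_powersetCard]
  apply Finset.card_bij' (fun J _ => J \ Mx) (fun K _ => K ∪ Mx)
  · intro J hJ
    rw [Finset.mem_filter, Finset.mem_powersetCard_univ] at hJ
    rw [Finset.mem_powersetCard]
    constructor
    · exact Finset.sdiff_subset_sdiff hJ.2.2 (le_refl _)
    · rw [Finset.card_sdiff_of_subset hJ.2.1, hJ.1]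
  · intro K hK
    rw [Finset.mem_powersetCard] at hK
    have hdisj : Disjoint K Mx := Finset.disjoint_of_subset_left hK.1 Finset.sdiff_disjoint
    rw [Finset.mem_filter, Finset.mem_powersetCard_univ]
    refine ⟨?_, Finset.subset_union_right, Finset.union_subset
      (hK.1.trans Finset.sdiff_subset) hMx⟩
    rw [Finset.card_union_of_disjoint hdisj, hK.2]
    omega
  · intro J hJ
    rw [Finset.mem_filter] at hJ
    exact Finset.sdiff_union_of_subset hJ.2.1
  · intro K hK
    rw [Finset.mem_powersetCard] at hK
    have hdisj : Disjoint K Mx := Finset.disjoint_of_subset_left hK.1 Finset.sdiff_disjoint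
    exact Finset.union_sdiff_cancel_right hdisj

lemma abs_lam_le' (t : ℕ → ℂ) (a b : ℕ) :
    ‖lam t a b‖ ≤
      ∑ k ∈ Finset.Icc b a, (((a - b).choose (k - b) : ℝ)) * ‖t k‖ := by
  refine (norm_sum_le _ _).trans_eq ?_
  apply Finset.sum_congr rfl
  intro k _
  rw [norm_mul, Complex.norm_natCast]

def Fam {n : ℕ} (c : Fin n → Fin n → Prop) (I : Finset (Fin n)) (k : ℕ) :
    Finset (Finset (Fin n)) :=
  (Finset.univ.powersetCard k).filter (fun J => maxIn c I ⊆ J ∧ J ⊆ I)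

lemma mem_Fam {n : ℕ} (c : Fin n → Fin n → Prop) (I : Finset (Fin n)) (k : ℕ)
    (J : Finset (Fin n)) :
    J ∈ Fam c I k ↔ J.card = k ∧ maxIn c I ⊆ J ∧ J ⊆ I := by
  unfold Fam
  rw [Finset.mem_filter, Finset.mem_powersetCard_univ]

lemma Fam_card {n : ℕ} (c : Fin n → Fin n → Prop) (I : Finset (Fin n)) (k : ℕ)
    (hk : (maxIn c I).card ≤ k) :
    (Fam c I k).card = (I.card - (maxIn c I).card).choose (k - (maxIn c I).card) := by
  unfold Fam
  exact card_sandwich I (maxIn c I) (Finset.filter_subset _ _) k hk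

lemma Fam_card_zero {n : ℕ} (c : Fin n → Fin n → Prop) (I : Finset (Fin n)) (k : ℕ)
    (hk : ¬ ((maxIn c I).card ≤ k ∧ k ≤ I.card)) : (Fam c I k).card = 0 := by
  rw [Finset.card_eq_zero, Finset.eq_empty_iff_forall_notMem]
  intro J hJ
  rw [mem_Fam] at hJ
  obtain ⟨h1, h2, h3⟩ := hJ
  rcases not_and_or.1 hk with h | h
  · exact h (h1 ▸ Finset.card_le_card h2)
  · exact h (h1 ▸ Finset.card_le_card h3)

lemma Qval_le (t : ℕ → ℂ) {n : ℕ} (c : Fin n → Fin n → Prop) (hc : IsNode c) :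
    Qval t c ≤ ∑ k ∈ Finset.range (n + 1), (n.choose k : ℝ) * ‖t k‖ := by
  classical
  set Ideals := Finset.univ.filter (fun I : Finset (Fin n) => isIdeal c I) with hIdeals
  have hcard : ∀ I : Finset (Fin n), I.card ≤ n := by
    intro I
    have := Finset.card_le_univ I
    simpa using this
  have step1 : Qval t c ≤ ∑ I ∈ Ideals, ∑ k ∈ Finset.Icc (maxIn c I).card I.card,
      ((I.card - (maxIn c I).card).choose (k - (maxIn c I).card) : ℝ) * ‖t k‖ :=
    Finset.sum_le_sum fun I _ => abs_lam_le' t I.card (maxIn c I).card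
  refine step1.trans ?_
  have step2 : ∀ I ∈ Ideals, ∑ k ∈ Finset.Icc (maxIn c I).card I.card,
      ((I.card - (maxIn c I).card).choose (k - (maxIn c I).card) : ℝ) * ‖t k‖
      = ∑ k ∈ Finset.range (n + 1), ((Fam c I k).card : ℝ) * ‖t k‖ := by
    intro I _
    have hsub : Finset.Icc (maxIn c I).card I.card ⊆ Finset.range (n + 1) := by
      intro k hk
      rw [Finset.mem_Icc] at hk
      rw [Finset.mem_range]
      have := hcard I
      omega
    calc ∑ k ∈ Finset.Icc (maxIn c I).card I.card,
          ((I.card - (maxIn c I).card).choose (k - (maxIn c I).card) : ℝ) * ‖t k‖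
        = ∑ k ∈ Finset.Icc (maxIn c I).card I.card,
          ((Fam c I k).card : ℝ) * ‖t k‖ := by
          apply Finset.sum_congr rfl
          intro k hk
          rw [Finset.mem_Icc] at hk
          rw [Fam_card c I k hk.1]
    _ = ∑ k ∈ Finset.range (n + 1), ((Fam c I k).card : ℝ) * ‖t k‖ := by
          apply Finset.sum_subset hsub
          intro k _ hk2
          rw [Finset.mem_Icc] at hk2
          rw [Fam_card_zero c I k (by omega)]
          simp
  rw [Finset.sum_congr rfl step2, Finset.sum_comm]
  apply Finset.sum_le_sum
  intro k _
  have hdisj : ∀ I1 ∈ Ideals, ∀ I2 ∈ Ideals, I1 ≠ I2 → Disjoint (Fam c I1 k) (Fam c I2 k) := by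
    intro I1 h1 I2 h2 hne
    rw [Finset.disjoint_left]
    intro J hJ1 hJ2
    rw [mem_Fam] at hJ1 hJ2
    rw [hIdeals, Finset.mem_filter] at h1 h2
    exact hne (ideal_eq_of_sandwich c hc h1.2 h2.2 hJ1.2.1 hJ1.2.2 hJ2.2.1 hJ2.2.2)
  have hbound : ∑ I ∈ Ideals, (Fam c I k).card ≤ (Finset.univ.powersetCard k :
      Finset (Finset (Fin n))).card := by
    rw [← Finset.card_biUnion hdisj]
    apply Finset.card_le_card
    intro J hJ
    rw [Finset.mem_biUnion] at hJ
    obtain ⟨I, _, hJ⟩ := hJ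
    rw [mem_Fam] at hJ
    rw [Finset.mem_powersetCard_univ]
    exact hJ.1
  have hchoose : (Finset.univ.powersetCard k : Finset (Finset (Fin n))).card = n.choose k := by
    rw [Finset.card_powersetCard]
    simp
  rw [← Finset.sum_mul]
  apply mul_le_mul_of_nonneg_right _ (norm_nonneg _)
  rw [← hchoose]
  exact_mod_cast hbound

def resNode {n : ℕ} (p : Fin (n+1) → Fin (n+1) → Prop) : Fin n → Fin n → Prop :=
  fun i j => p i.castSucc j.castSucc

def idealOf {n : ℕ} (p : Fin (n+1) → Fin (n+1) → Prop) : Finset (Fin n) :=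
  Finset.univ.filter (fun i => p i.castSucc (Fin.last n))

def extNode {n : ℕ} (c : Fin n → Fin n → Prop) (I : Finset (Fin n)) :
    Fin (n+1) → Fin (n+1) → Prop :=
  fun i j => (∃ hi : (i : ℕ) < n, ∃ hj : (j : ℕ) < n, c ⟨i, hi⟩ ⟨j, hj⟩) ∨
    ((j : ℕ) = n ∧ ∃ hi : (i : ℕ) < n, ⟨(i : ℕ), hi⟩ ∈ I)

lemma extNode_castSucc {n : ℕ} (c : Fin n → Fin n → Prop) (I : Finset (Fin n))
    (i j : Fin n) : extNode c I i.castSucc j.castSucc ↔ c i j := by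
  unfold extNode
  constructor
  · rintro (⟨hi, hj, h⟩ | ⟨hj, _⟩)
    · convert h using 2 <;> rfl
    · simp [Fin.coe_castSucc] at hj
      omega
  · intro h
    left
    refine ⟨by simp, by simp, ?_⟩
    convert h using 2 <;> rfl

lemma extNode_last {n : ℕ} (c : Fin n → Fin n → Prop) (I : Finset (Fin n))
    (i : Fin n) : extNode c I i.castSucc (Fin.last n) ↔ i ∈ I := by
  unfold extNode
  constructor
  · rintro (⟨_, hj, _⟩ | ⟨_, hi, h⟩)
    · simp [Fin.val_last] at hj
    · convert h using 2 <;> rfl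
  · intro h
    right
    refine ⟨by simp, by simp, ?_⟩
    convert h using 2 <;> rfl

lemma isNode_ext {n : ℕ} {c : Fin n → Fin n → Prop} {I : Finset (Fin n)}
    (hc : IsNode c) (hI : isIdeal c I) : IsNode (extNode c I) := by
  refine ⟨?_, ?_, ?_⟩
  · rintro i (⟨hi, hj, h⟩ | ⟨hj, hi, _⟩)
    · exact hc.1 _ h
    · omega
  · rintro i j k (⟨hi, hj, hij⟩ | ⟨hj, hi, _⟩) (⟨hj', hk, hjk⟩ | ⟨hk, hj', hjmem⟩)
    · exact Or.inl ⟨hi, hk, hc.2.1 _ _ _ hij hjk⟩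
    · exact Or.inr ⟨hk, hi, hI _ hjmem _ hij⟩
    · omega
    · omega
  · rintro i j (⟨hi, hj, h⟩ | ⟨hj, hi, _⟩)
    · exact hc.2.2 _ _ h
    · have := j.2
      omega

lemma isNode_res {n : ℕ} {p : Fin (n+1) → Fin (n+1) → Prop} (hp : IsNode p) :
    IsNode (resNode p) := by
  refine ⟨fun i h => hp.1 _ h, fun i j k hij hjk => hp.2.1 _ _ _ hij hjk, ?_⟩
  intro i j h
  have := hp.2.2 _ _ h
  simpa using this

lemma isIdeal_idealOf {n : ℕ} {p : Fin (n+1) → Fin (n+1) → Prop} (hp : IsNode p) :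
    isIdeal (resNode p) (idealOf p) := by
  intro j hj i hij
  rw [idealOf, Finset.mem_filter] at hj ⊢
  exact ⟨Finset.mem_univ _, hp.2.1 _ _ _ hij hj.2⟩

lemma res_ext {n : ℕ} (c : Fin n → Fin n → Prop) (I : Finset (Fin n)) :
    resNode (extNode c I) = c := by
  funext i j
  exact propext (extNode_castSucc c I i j)

lemma idealOf_ext {n : ℕ} (c : Fin n → Fin n → Prop) (I : Finset (Fin n)) :
    idealOf (extNode c I) = I := by
  ext i
  rw [idealOf, Finset.mem_filter]
  rw [extNode_last]
  simp

lemma ext_res {n : ℕ} (p : Fin (n+1) → Fin (n+1) → Prop) (hp : IsNode p) :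
    extNode (resNode p) (idealOf p) = p := by
  funext i j
  apply propext
  unfold extNode resNode idealOf
  constructor
  · rintro (⟨hi, hj, h⟩ | ⟨hj, hi, h⟩)
    · convert h using 2 <;> exact (Fin.ext (by simp)).symm
    · rw [Finset.mem_filter] at h
      have h2 := h.2
      have hj' : j = Fin.last n := Fin.ext (by simpa using hj)
      rw [hj']
      convert h2 using 2 <;> exact Fin.ext rfl
  · intro h
    by_cases hj : (j : ℕ) < n
    · left
      have hi : (i : ℕ) < n := by
        have h1 := hp.2.2 _ _ h
        omega
      refine ⟨hi, hj, ?_⟩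
      convert h using 2 <;> exact Fin.ext (by simp)
    · right
      have hjn : (j : ℕ) = n := by
        have := j.2
        omega
      have hi : (i : ℕ) < n := by
        have h1 := hp.2.2 _ _ h
        omega
      refine ⟨hjn, hi, ?_⟩
      rw [Finset.mem_filter]
      refine ⟨Finset.mem_univ _, ?_⟩
      have hj' : Fin.last n = j := Fin.ext (by simpa using hjn.symm)
      rw [hj']
      convert h using 2 <;> exact Fin.ext rfl

def castEmb (n : ℕ) : Fin n ↪ Fin (n+1) := ⟨Fin.castSucc, Fin.castSucc_injective n⟩

lemma pastOf_ext_castSucc {n : ℕ} (c : Fin n → Fin n → Prop) (I : Finset (Fin n))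
    (m : Fin n) :
    pastOf (extNode c I) m.castSucc = (pastOf c m).map (castEmb n) := by
  ext i
  rw [pastOf, Finset.mem_filter, Finset.mem_map]
  simp only [Finset.mem_univ, true_and]
  constructor
  · rintro (⟨hi, hj, h⟩ | ⟨hj, _⟩)
    · refine ⟨⟨(i : ℕ), hi⟩, ?_, Fin.ext (by simp [castEmb])⟩
      rw [pastOf, Finset.mem_filter]
      refine ⟨Finset.mem_univ _, ?_⟩
      convert h using 2 <;> rfl
    · simp at hj
      omega
  · rintro ⟨a, ha, rfl⟩
    rw [pastOf, Finset.mem_filter] at ha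
    have : extNode c I a.castSucc m.castSucc ↔ c a m := extNode_castSucc c I a m
    exact this.2 ha.2

lemma pastOf_ext_last {n : ℕ} (c : Fin n → Fin n → Prop) (I : Finset (Fin n)) :
    pastOf (extNode c I) (Fin.last n) = I.map (castEmb n) := by
  ext i
  rw [pastOf, Finset.mem_filter, Finset.mem_map]
  simp only [Finset.mem_univ, true_and]
  constructor
  · rintro (⟨_, hj, _⟩ | ⟨_, hi, h⟩)
    · simp at hj
    · exact ⟨⟨(i : ℕ), hi⟩, h, Fin.ext (by simp [castEmb])⟩
  · rintro ⟨a, ha, rfl⟩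
    exact (extNode_last c I a).2 ha

lemma maxIn_ext_map {n : ℕ} (c : Fin n → Fin n → Prop) (I : Finset (Fin n))
    (J : Finset (Fin n)) :
    maxIn (extNode c I) (J.map (castEmb n)) = (maxIn c J).map (castEmb n) := by
  ext i
  simp only [maxIn, Finset.mem_filter]
  constructor
  · rintro ⟨hmem, hmax⟩
    rw [Finset.mem_map] at hmem
    obtain ⟨a, ha, rfl⟩ := hmem
    rw [Finset.mem_map]
    refine ⟨a, ?_, rfl⟩
    rw [Finset.mem_filter]
    refine ⟨ha, fun b hb hc' => ?_⟩
    exact hmax ((castEmb n) b) (Finset.mem_map_of_mem _ hb)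
      ((extNode_castSucc c I a b).2 hc')
  · intro hmem
    rw [Finset.mem_map] at hmem
    obtain ⟨a, ha, rfl⟩ := hmem
    rw [Finset.mem_filter] at ha
    refine ⟨Finset.mem_map_of_mem _ ha.1, ?_⟩
    intro b hb hc'
    rw [Finset.mem_map] at hb
    obtain ⟨b', hb', rfl⟩ := hb
    exact ha.2 b' hb' ((extNode_castSucc c I a b').1 hc')

set_option maxHeartbeats 2000000 in
lemma amp_ext (t : ℕ → ℂ) {n : ℕ} (hn : 1 ≤ n) (c : Fin n → Fin n → Prop)
    (I : Finset (Fin n)) :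
    amp t (extNode c I) = amp t c * (lam t I.card (maxIn c I).card / lam t n 0) := by
  classical
  unfold amp
  rw [Finset.prod_filter, Finset.prod_filter, Fin.prod_univ_castSucc]
  congr 1
  · apply Finset.prod_congr rfl
    intro m _
    have hcoe : ((m.castSucc : Fin (n+1)) : ℕ) = (m : ℕ) := by simp
    rw [hcoe, pastOf_ext_castSucc c I m, maxIn_ext_map c I (pastOf c m),
      Finset.card_map, Finset.card_map]
  · have hcoe : ((Fin.last n : Fin (n+1))) = (n : ℕ) := by simp
    rw [if_pos (by simp [Fin.val_last]; omega), pastOf_ext_last c I,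
      maxIn_ext_map c I I, Finset.card_map, Finset.card_map]
    simp [Fin.val_last]

lemma Tval_nonneg (t : ℕ → ℂ) (n : ℕ) : 0 ≤ Tval t n :=
  Finset.sum_nonneg fun _ _ => norm_nonneg _

lemma Tval_one (t : ℕ → ℂ) : Tval t 1 = 1 := by
  classical
  have hamp : ∀ p : Node 1, amp t p.1 = 1 := by
    intro p
    unfold amp
    rw [Finset.prod_eq_one]
    intro m hm
    rw [Finset.mem_filter] at hm
    have := hm.2
    have h1 := m.2
    omega
  have huniq : ∀ p q : Node 1, p = q := by
    rintro ⟨p, hp⟩ ⟨q, hq⟩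
    apply Subtype.ext
    funext i j
    have h1 : (i : ℕ) = 0 := by omega
    have h2 : (j : ℕ) = 0 := by omega
    apply propext
    constructor
    · intro h
      have := hp.2.2 i j h
      omega
    · intro h
      have := hq.2.2 i j h
      omega
  have hcard : Fintype.card (Node 1) = 1 := by
    have : Nonempty (Node 1) := ⟨⟨fun _ _ => False, fun i => id, fun i j k h => h.elim,
      fun i j h => h.elim⟩⟩
    rw [Fintype.card_eq_one_iff]
    obtain ⟨p⟩ := this
    exact ⟨p, fun q => huniq q p⟩
  unfold Tval
  rw [Finset.sum_congr rfl (fun p _ => by rw [hamp p, norm_one])]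
  rw [Finset.sum_const, Finset.card_univ, hcard]
  simp

lemma Tval_succ (t : ℕ → ℂ) {n : ℕ} (hn : 1 ≤ n) (hlam : lam t n 0 ≠ 0) :
    Tval t (n + 1) ≤ (1 + zetaA t n) * Tval t n := by
  classical
  set E : (Σ c : Node n, {I : Finset (Fin n) // isIdeal c.1 I}) → Node (n+1) :=
    fun x => ⟨extNode x.1.1 x.2.1, isNode_ext x.1.2 x.2.2⟩ with hE
  have hbij : Function.Bijective E := by
    constructor
    · rintro ⟨c1, I1⟩ ⟨c2, I2⟩ h
      have h' : extNode c1.1 I1.1 = extNode c2.1 I2.1 := congrArg Subtype.val h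
      have hc : c1 = c2 := Subtype.ext (by rw [← res_ext c1.1 I1.1, h', res_ext])
      subst hc
      have hI : I1 = I2 := Subtype.ext (by rw [← idealOf_ext c1.1 I1.1, h', idealOf_ext])
      rw [hI]
    · rintro ⟨p, hp⟩
      exact ⟨⟨⟨resNode p, isNode_res hp⟩, ⟨idealOf p, isIdeal_idealOf hp⟩⟩,
        Subtype.ext (ext_res p hp)⟩
  have h1 : Tval t (n+1) = ∑ x : (Σ c : Node n, {I : Finset (Fin n) // isIdeal c.1 I}),
      ‖amp t (extNode x.1.1 x.2.1)‖ := by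
    unfold Tval
    exact (Fintype.sum_bijective E hbij _ _ (fun x => rfl)).symm
  rw [h1]
  rw [← Finset.univ_sigma_univ, Finset.sum_sigma]
  have h2 : ∀ c : Node n, ∑ I : {I : Finset (Fin n) // isIdeal c.1 I},
      ‖amp t (extNode c.1 I.1)‖
      = ‖amp t c.1‖ * (Qval t c.1 / ‖lam t n 0‖) := by
    intro c
    have h3 : ∀ I : {I : Finset (Fin n) // isIdeal c.1 I},
        ‖amp t (extNode c.1 I.1)‖
        = ‖amp t c.1‖ *
          (‖lam t I.1.card (maxIn c.1 I.1).card‖ / ‖lam t n 0‖) := by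
      intro I
      rw [amp_ext t hn c.1 I.1, norm_mul, norm_div]
    rw [Finset.sum_congr rfl (fun I _ => h3 I), ← Finset.mul_sum, ← Finset.sum_div]
    congr 2
    unfold Qval
    rw [Finset.sum_subtype (p := fun I : Finset (Fin n) => isIdeal c.1 I)
      (Finset.univ.filter (fun I : Finset (Fin n) => isIdeal c.1 I))
      (by intro I; simp) (fun I => ‖lam t I.card (maxIn c.1 I).card‖)]
  rw [Finset.sum_congr rfl (fun c _ => h2 c)]
  have h4 : ∀ c : Node n, ‖amp t c.1‖ * (Qval t c.1 / ‖lam t n 0‖)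
      ≤ (1 + zetaA t n) * ‖amp t c.1‖ := by
    intro c
    rw [mul_comm (1 + zetaA t n)]
    apply mul_le_mul_of_nonneg_left _ (norm_nonneg _)
    have habs : 0 < ‖lam t n 0‖ := norm_pos_iff.mpr hlam
    rw [div_le_iff₀ habs]
    have : (1 + zetaA t n) * ‖lam t n 0‖
        = ∑ k ∈ Finset.range (n + 1), (n.choose k : ℝ) * ‖t k‖ := by
      unfold zetaA
      field_simp
      ring
    rw [this]
    exact Qval_le t c.1 c.2
  calc ∑ c : Node n, ‖amp t c.1‖ * (Qval t c.1 / ‖lam t n 0‖)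
      ≤ ∑ c : Node n, (1 + zetaA t n) * ‖amp t c.1‖ :=
        Finset.sum_le_sum fun c _ => h4 c
  _ = (1 + zetaA t n) * Tval t n := by rw [← Finset.mul_sum]; rfl

lemma Tval_exp (t : ℕ → ℂ) (hlam : ∀ n, lam t n 0 ≠ 0) :
    ∀ n, 1 ≤ n → Tval t n ≤ Real.exp (∑ m ∈ Finset.Ico 1 n, zetaA t m) := by
  intro n hn
  induction n with
  | zero => omega
  | succ n ih =>
      rcases Nat.lt_or_ge n 1 with h | h
      · have hn0 : n = 0 := by omega
        subst hn0
        rw [Tval_one]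
        simp
      · have ih' := ih h
        calc Tval t (n + 1) ≤ (1 + zetaA t n) * Tval t n := Tval_succ t h (hlam n)
        _ ≤ Real.exp (zetaA t n) * Real.exp (∑ m ∈ Finset.Ico 1 n, zetaA t m) := by
            have h5 : 1 + zetaA t n ≤ Real.exp (zetaA t n) := by
              rw [add_comm]
              exact Real.add_one_le_exp _
            exact mul_le_mul h5 ih' (Tval_nonneg t n) (Real.exp_nonneg _)
        _ = Real.exp (∑ m ∈ Finset.Ico 1 (n + 1), zetaA t m) := by
            rw [← Real.exp_add, Finset.sum_Ico_succ_top h, add_comm]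

/-- countably many couplings which are eventually colinear,
t_k = s_k·e^{iφ₀} for k > k₀ with s_k = s^k (s > 0) or s_k = 2^{2k}: Σ_{n≥1} ζ_n^a
converges, hence the associated ℂSG measure is of bounded variation. -/
theorem statement_14 (k0 : ℕ) (hk0 : 1 ≤ k0) (φ0 : ℝ)
    (t : ℕ → ℂ) (ht0 : t 0 = 1)
    (hcol : (∃ s : ℝ, 0 < s ∧ ∀ k : ℕ, k0 < k →
        t k = ((s ^ k : ℝ) : ℂ) * Complex.exp (Complex.I * (φ0 : ℂ))) ∨
      (∀ k : ℕ, k0 < k →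
        t k = (((2 : ℝ) ^ (2 * k) : ℝ) : ℂ) * Complex.exp (Complex.I * (φ0 : ℂ))))
    (hlam : ∀ n : ℕ, lam t n 0 ≠ 0) :
    (∃ L : ℝ, Filter.Tendsto (fun N => ∑ n ∈ Finset.Ico 1 N, zetaA t n)
        Filter.atTop (nhds L)) ∧
    (∀ μ : Set Omega → ℂ, IsCSG t μ → BoundedVariation μ) := by
  classical
  set E : ℂ := Complex.exp (Complex.I * (φ0 : ℂ)) with hEdef
  have hE : ‖E‖ = 1 := by
    rw [hEdef, Complex.norm_exp]
    have h0 : (Complex.I * (φ0 : ℂ)).re = 0 := by simp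
    rw [h0, Real.exp_zero]
  have hcol' : ∃ S : ℕ → ℝ, ∀ k, k0 < k → 0 < S k ∧ t k = (S k : ℂ) * E := by
    rcases hcol with ⟨s, hs, h⟩ | h
    · exact ⟨fun k => s ^ k, fun k hk => ⟨pow_pos hs k, h k hk⟩⟩
    · exact ⟨fun k => 2 ^ (2 * k), fun k hk => ⟨by positivity, h k hk⟩⟩
  obtain ⟨S, hS⟩ := hcol'
  have hsum : Summable (zetaA t) := zetaA_summable k0 t E hE S hS hlam
  have hz0 : zetaA t 0 = 0 := by
    have hl : lam t 0 0 = 1 := by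
      unfold lam
      simp [ht0]
    unfold zetaA
    rw [hl]
    simp [ht0]
  constructor
  · refine ⟨∑' n, zetaA t n, ?_⟩
    have ht := hsum.hasSum.tendsto_sum_nat
    have heq : (fun N => ∑ n ∈ Finset.Ico 1 N, zetaA t n)
        = (fun N => ∑ n ∈ Finset.range N, zetaA t n) := by
      funext N
      cases N with
      | zero => simp
      | succ N =>
          rw [Finset.range_eq_Ico, Finset.sum_eq_sum_Ico_succ_bot (Nat.succ_pos N), hz0,
            zero_add]
    rw [heq]
    exact ht
  · intro μ hμ
    refine ⟨Real.exp (∑' n, zetaA t n), ?_⟩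
    intro π hπ
    obtain ⟨n, hn, hb⟩ := partition_bound t μ hμ π hπ
    refine hb.trans ?_
    refine (Tval_exp t hlam n hn).trans ?_
    apply Real.exp_le_exp.2
    apply Summable.sum_le_tsum _ _ hsum
    intro m _
    exact zetaA_nonneg t m (hlam m)

end
end
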